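/- Let A be a commutative ring that is free as a \mathbb{Z}-module with basis B. Assume that for all b, b' \in B, the product b \cdot b' is a nonzero \mathbb{Z}_{\geq 0}-linear combination of elements of B. Suppose g \in A satisfies g \cdot b \in B for every b \in B, and suppose u_1, \ldots, u_\ell \in B satisfy u_1 \cdot u_2 \cdots u_\ell = g. Then for each i and each b \in B, the product u_i \cdot b is an element of B. -/

import Mathlib

namespace Stmt9Aux

variable {A : Type*} [CommRing A] {ι : Type*} (b : Module.Basis ι ℤ A)

noncomputable def sig : A →ₗ[ℤ] ℤ :=
  (Finsupp.lsum ℤ fun _ : ι => LinearMap.id).comp (b.repr : A →ₗ[ℤ] (ι →₀ ℤ))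

lemma sig_apply (x : A) : sig b x = (b.repr x).sum fun _ c => c := rfl

lemma sig_basis (j : ι) : sig b (b j) = 1 := by
  simp [sig_apply, b.repr_self]

lemma one_le_sig {x : A} (hx : x ≠ 0) (h : ∀ k, 0 ≤ b.repr x k) : 1 ≤ sig b x := by
  have hr : b.repr x ≠ 0 := fun h0 => hx (by simpa using congrArg b.repr.symm h0)
  obtain ⟨k, hk⟩ := Finsupp.ne_iff.mp hr
  have hk' : b.repr x k ≠ 0 := by simpa using hk
  have hkmem : k ∈ (b.repr x).support := Finsupp.mem_support_iff.mpr (by simpa using hk)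
  have h1 : b.repr x k ≤ (b.repr x).sum fun _ c => c :=
    Finset.single_le_sum (fun i _ => h i) hkmem
  have := h k
  rw [sig_apply]
  omega

lemma expand_mul (x y : A) :
    x * y = (b.repr x).sum fun i c => c • (b i * y) := by
  conv_lhs => rw [← b.linearCombination_repr x, Finsupp.linearCombination_apply]
  rw [Finsupp.sum_mul]
  exact Finsupp.sum_congr fun i _ => smul_mul_assoc _ _ _


lemma basis_mul (hnz : ∀ i j, b i * b j ≠ 0) (hpos : ∀ i j k, 0 ≤ b.repr (b i * b j) k)
    (i : ι) {y : A} (hy : ∀ k, 0 ≤ b.repr y k) :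
    (∀ k, 0 ≤ b.repr (b i * y) k) ∧ sig b y ≤ sig b (b i * y) := by
  have hexp : b i * y = (b.repr y).sum fun j d => d • (b i * b j) := by
    rw [mul_comm]
    rw [expand_mul b y (b i)]
    exact Finsupp.sum_congr fun j _ => by rw [mul_comm]
  constructor
  · intro k
    rw [hexp, map_finsuppSum (b.repr), Finsupp.sum_apply]
    refine Finset.sum_nonneg fun j hj => ?_
    simp only [map_smul, Finsupp.smul_apply, smul_eq_mul]
    exact mul_nonneg (hy j) (hpos i j k)
  · rw [hexp, map_finsuppSum (sig b)]
    rw [sig_apply b y, Finsupp.sum]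
    rw [Finsupp.sum]
    refine Finset.sum_le_sum fun j hj => ?_
    simp only [map_smul, smul_eq_mul]
    have h1 : 1 ≤ sig b (b i * b j) := one_le_sig b (hnz i j) (hpos i j)
    nlinarith [hy j]

lemma mul_good (hnz : ∀ i j, b i * b j ≠ 0) (hpos : ∀ i j k, 0 ≤ b.repr (b i * b j) k)
    {x y : A} (hx0 : x ≠ 0) (hx : ∀ k, 0 ≤ b.repr x k)
    (hy0 : y ≠ 0) (hy : ∀ k, 0 ≤ b.repr y k) :
    x * y ≠ 0 ∧ (∀ k, 0 ≤ b.repr (x * y) k) ∧ sig b x * sig b y ≤ sig b (x * y) := by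
  have hnn : ∀ k, 0 ≤ b.repr (x * y) k := by
    intro k
    rw [expand_mul b x y, map_finsuppSum (b.repr), Finsupp.sum_apply]
    refine Finset.sum_nonneg fun i hi => ?_
    simp only [map_smul, Finsupp.smul_apply, smul_eq_mul]
    exact mul_nonneg (hx i) ((basis_mul b hnz hpos i hy).1 k)
  have hsig : sig b x * sig b y ≤ sig b (x * y) := by
    rw [expand_mul b x y, map_finsuppSum (sig b)]
    rw [sig_apply b x, Finsupp.sum, Finset.sum_mul, Finsupp.sum]
    refine Finset.sum_le_sum fun i hi => ?_
    simp only [map_smul, smul_eq_mul]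
    have h2 := (basis_mul b hnz hpos i hy).2
    nlinarith [hx i]
  have h1x : 1 ≤ sig b x := one_le_sig b hx0 hx
  have h1y : 1 ≤ sig b y := one_le_sig b hy0 hy
  refine ⟨fun h0 => ?_, hnn, hsig⟩
  rw [h0, map_zero] at hsig
  nlinarith

lemma eq_basis_of_sig_one {x : A} (hx : ∀ k, 0 ≤ b.repr x k) (hs : sig b x = 1) :
    ∃ j, x = b j := by
  classical
  have hx0 : x ≠ 0 := fun h0 => by simp [h0] at hs
  have hr : b.repr x ≠ 0 := fun h0 => hx0 (by simpa using congrArg b.repr.symm h0)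
  obtain ⟨j, hj⟩ := Finsupp.ne_iff.mp hr
  have hj' : b.repr x j ≠ 0 := by simpa using hj
  have hjmem : j ∈ (b.repr x).support := Finsupp.mem_support_iff.mpr hj'
  refine ⟨j, ?_⟩
  have hrepr : b.repr x = Finsupp.single j 1 := by
    ext k
    by_cases hk : k = j
    · subst hk
      have h1 : b.repr x k ≤ (b.repr x).sum fun _ c => c :=
        Finset.single_le_sum (fun i _ => hx i) hjmem
      rw [sig_apply] at hs
      have := hx k
      simp only [Finsupp.single_eq_same]
      omega
    · simp only [Finsupp.single_eq_of_ne' (Ne.symm hk)]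
      by_cases hkm : k ∈ (b.repr x).support
      · have hsub : ({j, k} : Finset ι) ⊆ (b.repr x).support := by
          intro a ha
          simp only [Finset.mem_insert, Finset.mem_singleton] at ha
          rcases ha with rfl | rfl
          · exact hjmem
          · exact hkm
        have hsum : ∑ a ∈ ({j, k} : Finset ι), b.repr x a ≤ (b.repr x).sum fun _ c => c :=
          Finset.sum_le_sum_of_subset_of_nonneg hsub (fun a _ _ => hx a)
        rw [Finset.sum_pair (Ne.symm hk)] at hsum
        rw [sig_apply] at hs
        have h1 : 1 ≤ b.repr x j := by have := hx j; omega
        have := hx k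
        omega
      · simpa using Finsupp.notMem_support_iff.mp hkm
  apply b.repr.injective
  rw [hrepr, b.repr_self]

lemma prod_good (hnz : ∀ i j, b i * b j ≠ 0) (hpos : ∀ i j k, 0 ≤ b.repr (b i * b j) k)
    {n : ℕ} (u : Fin n → ι) (s : Finset (Fin n)) :
    (∏ m ∈ s, b (u m)) = 1 ∨
      ((∏ m ∈ s, b (u m)) ≠ 0 ∧ ∀ k, 0 ≤ b.repr (∏ m ∈ s, b (u m)) k) := by
  classical
  induction s using Finset.induction with
  | empty => left; simp
  | insert a s hm ih =>
    right
    rw [Finset.prod_insert hm]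
    have hba : b (u a) ≠ 0 := b.ne_zero (u a)
    have hban : ∀ k, 0 ≤ b.repr (b (u a)) k := by
      intro k
      rw [b.repr_self]
      by_cases h : k = u a
      · simp [h]
      · simp [Finsupp.single_eq_of_ne' (fun he => h he.symm)]
    rcases ih with h1 | ⟨h0, hn⟩
    · rw [h1, mul_one]
      exact ⟨hba, hban⟩
    · have := mul_good b hnz hpos hba hban h0 hn
      exact ⟨this.1, this.2.1⟩

end Stmt9Aux


/-- Abstract positivity argument (after Buch–Wang): in a commutative ring that is
free as a `ℤ`-module with basis `b`, if all products of basis elements are nonzero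
nonnegative combinations of basis elements, `g` multiplies the basis into itself,
and a product of basis elements `u 1 ⋯ u ℓ` equals `g`, then each `u i` multiplies
the basis into itself. -/
theorem stmt9 {A : Type*} [CommRing A] {ι : Type*} (b : Module.Basis ι ℤ A)
    (hnz : ∀ i j, b i * b j ≠ 0)
    (hpos : ∀ i j k, 0 ≤ b.repr (b i * b j) k)
    (g : A) (hg : ∀ i, ∃ j, g * b i = b j)
    (ℓ : ℕ) (u : Fin ℓ → ι) (hu : (∏ k, b (u k)) = g) :
    ∀ k : Fin ℓ, ∀ i, ∃ j, b (u k) * b i = b j := by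
  classical
  intro k i
  obtain ⟨j0, hj0⟩ := hg i
  set x := b (u k) * b i with hxdef
  have hx0 : x ≠ 0 := hnz (u k) i
  have hxn : ∀ m, 0 ≤ b.repr x m := hpos (u k) i
  set y := ∏ m ∈ Finset.univ.erase k, b (u m) with hydef
  have hxy : y * x = b j0 := by
    rw [hxdef, hydef, ← mul_assoc, mul_comm y (b (u k)),
      Finset.mul_prod_erase Finset.univ (fun m => b (u m)) (Finset.mem_univ k), hu, hj0]
  rcases Stmt9Aux.prod_good b hnz hpos u (Finset.univ.erase k) with h1 | ⟨hy0, hyn⟩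
  · rw [← hydef] at h1
    rw [h1, one_mul] at hxy
    exact ⟨j0, hxy⟩
  · rw [← hydef] at hy0 hyn
    have hmg := Stmt9Aux.mul_good b hnz hpos hx0 hxn hy0 hyn
    have h1x := Stmt9Aux.one_le_sig b hx0 hxn
    have h1y := Stmt9Aux.one_le_sig b hy0 hyn
    have hs1 : Stmt9Aux.sig b (x * y) = 1 := by
      rw [mul_comm, hxy, Stmt9Aux.sig_basis]
    have hsx : Stmt9Aux.sig b x = 1 := by nlinarith [hmg.2.2]
    obtain ⟨j, hj⟩ := Stmt9Aux.eq_basis_of_sig_one b hxn hsx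
    exact ⟨j, hj⟩
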